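/- Let N ≥ 1 and n be natural numbers, T > 0 a real number, d : Fin N → ℝ with d i ≥ 0 for all i, and ρ, a : Fin n → ℝ with ρ j ≥ 0 and 0 < a j ≤ 1 for all j. Then ∑_{i=1}^{N} ∑_{j=1}^{n} ρ j · (a j)^{d i / T} ≥ N · ∑_{j=1}^{n} ρ j · (a j)^{x̄/T}, where x̄ := (∑_{i=1}^{N} d i)/N and the powers are real powers (rpow). -/

import Mathlib

lemma exp_jensen {N : ℕ} (hN : 1 ≤ N) (c : ℝ) (x : Fin N → ℝ) :
    (N : ℝ) * Real.exp (c * ((∑ i, x i) / N)) ≤ ∑ i, Real.exp (c * x i) := by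
  have hNpos : (0:ℝ) < N := by exact_mod_cast hN
  have hconv : ConvexOn ℝ Set.univ (fun y : ℝ => Real.exp (c * y)) := by
    have := (convexOn_exp).comp_linearMap (LinearMap.smulRight (LinearMap.id : ℝ →ₗ[ℝ] ℝ) c)
    simp [Function.comp, mul_comm] at this
    exact this
  have h := hconv.map_sum_le (t := Finset.univ) (w := fun _ : Fin N => (N:ℝ)⁻¹)
      (p := x) (fun i _ => by positivity)
      (by simp [Finset.card_univ, mul_comm]; field_simp) (fun i _ => trivial)
  simp only [smul_eq_mul] at h
  have h2 : Real.exp (c * ((∑ i, x i) / N)) ≤ (N:ℝ)⁻¹ * ∑ i, Real.exp (c * x i) := by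
    rw [Finset.mul_sum]
    rw [div_eq_inv_mul, Finset.mul_sum]
    exact h
  calc (N:ℝ) * Real.exp (c * ((∑ i, x i) / N))
      ≤ (N:ℝ) * ((N:ℝ)⁻¹ * ∑ i, Real.exp (c * x i)) := by
        exact mul_le_mul_of_nonneg_left h2 hNpos.le
    _ = ∑ i, Real.exp (c * x i) := by field_simp

theorem stmt_6 (N n : ℕ) (hN : 1 ≤ N) (T : ℝ) (hT : 0 < T)
    (d : Fin N → ℝ) (hd : ∀ i, 0 ≤ d i)
    (ρ a : Fin n → ℝ) (hρ : ∀ j, 0 ≤ ρ j) (ha : ∀ j, 0 < a j ∧ a j ≤ 1) :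
    ∑ i, ∑ j, ρ j * a j ^ (d i / T) ≥
      (N : ℝ) * ∑ j, ρ j * a j ^ (((∑ i, d i) / N) / T) := by
  rw [Finset.sum_comm, Finset.mul_sum]
  apply Finset.sum_le_sum
  intro j _
  rw [← Finset.mul_sum, mul_comm ((N:ℝ)) _, mul_assoc]
  apply mul_le_mul_of_nonneg_left _ (hρ j)
  have haj := (ha j).1
  have key := exp_jensen hN (Real.log (a j) / T) d
  have hrw : ∀ y : ℝ, a j ^ (y / T) = Real.exp (Real.log (a j) / T * y) := by
    intro y
    rw [Real.rpow_def_of_pos haj]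
    ring_nf
  rw [hrw]
  have : ∀ i, a j ^ (d i / T) = Real.exp (Real.log (a j) / T * d i) := fun i => hrw (d i)
  simp_rw [this]
  rw [mul_comm]
  exact key
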